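/- Let n and t be integers with 1 ≤ t ≤ n/2. Let L_t be the real vector space of homogeneous multilinear degree-t polynomials in x_1,…,x_n and let W_t : L_t → L_{t−1} be given by W_t p = Σ_{i=1}^n ∂p/∂x_i. Then the kernel of W_t equals the linear span of the polynomials p_A(x) = Π_{i=1}^{t} (x_{a(2i−1)} − x_{a(2i)}), taken over all arrays A = (a(1), a(2), …, a(2t)) of 2t pairwise distinct indices in {1,…,n}. In particular, each such product of differences lies in Ker(W_t), and together they span it. -/

import Mathlib

open MvPolynomial

/-- The space `L_t` of homogeneous multilinear degree-`t` polynomials in `n`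
variables, i.e. the span of the monomials `x^S = Π_{i∈S} x_i` with `|S| = t`. -/
noncomputable def homogML (n t : ℕ) : Submodule ℝ (MvPolynomial (Fin n) ℝ) :=
  Submodule.span ℝ
    {p | ∃ S : Finset (Fin n), S.card = t ∧ p = ∏ i ∈ S, X i}

/-- The operator `W p = Σ_i ∂p/∂x_i`. -/
noncomputable def Wop (n : ℕ) :
    MvPolynomial (Fin n) ℝ →ₗ[ℝ] MvPolynomial (Fin n) ℝ :=
  ∑ i : Fin n, (pderiv i).toLinearMap

noncomputable section KerW

variable {n : ℕ}

/-- Coefficient space for multilinear polynomials. -/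
abbrev FF (n : ℕ) := Finset (Fin n) → ℝ

/-- Down operator relative to ground set `V`. -/
def DV (V : Finset (Fin n)) : FF n →ₗ[ℝ] FF n where
  toFun f := fun T => ∑ i ∈ V \ T, f (insert i T)
  map_add' f g := by funext T; simp [Finset.sum_add_distrib]
  map_smul' c f := by funext T; simp [Finset.mul_sum]

/-- Up operator (adjoint of `DV V`). -/
def UV (V : Finset (Fin n)) (f : FF n) : FF n := fun S => ∑ i ∈ S ∩ V, f (S.erase i)

/-- Inner product. -/
def ip (f g : FF n) : ℝ := ∑ S : Finset (Fin n), f S * g S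

/-- Generic reindexing of (set, added element) pairs. -/
lemma sum_insert_reindex {M : Type*} [AddCommMonoid M] (W : Finset (Fin n))
    (G : Finset (Fin n) → Fin n → M) :
    ∑ T : Finset (Fin n), ∑ i ∈ W \ T, G T i
      = ∑ S : Finset (Fin n), ∑ i ∈ S ∩ W, G (S.erase i) i := by
  rw [Finset.sum_sigma', Finset.sum_sigma']
  refine Finset.sum_nbij' (fun p => ⟨insert p.2 p.1, p.2⟩) (fun p => ⟨p.1.erase p.2, p.2⟩)
    ?_ ?_ ?_ ?_ ?_
  · rintro ⟨T, i⟩ h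
    simp only [Finset.mem_sigma, Finset.mem_univ, Finset.mem_sdiff, true_and] at h ⊢
    simp [Finset.mem_inter, h.1]
  · rintro ⟨S, i⟩ h
    simp only [Finset.mem_sigma, Finset.mem_univ, Finset.mem_inter, true_and] at h ⊢
    simp [Finset.mem_sdiff, h.2, Finset.notMem_erase]
  · rintro ⟨T, i⟩ h
    simp only [Finset.mem_sigma, Finset.mem_univ, Finset.mem_sdiff, true_and] at h
    simp [Finset.erase_insert h.2]
  · rintro ⟨S, i⟩ h
    simp only [Finset.mem_sigma, Finset.mem_univ, Finset.mem_inter, true_and] at h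
    simp [Finset.insert_erase h.1]
  · rintro ⟨T, i⟩ h
    simp only [Finset.mem_sigma, Finset.mem_univ, Finset.mem_sdiff, true_and] at h
    simp [Finset.erase_insert h.2]

lemma ip_adjoint (V : Finset (Fin n)) (f g : FF n) :
    ip (DV V f) g = ip f (UV V g) := by
  unfold ip DV UV
  simp only [LinearMap.coe_mk, AddHom.coe_mk]
  rw [show (∑ T : Finset (Fin n), (∑ i ∈ V \ T, f (insert i T)) * g T)
      = ∑ T : Finset (Fin n), ∑ i ∈ V \ T, f (insert i T) * g T by
    refine Finset.sum_congr rfl fun T _ => ?_; rw [Finset.sum_mul]]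
  rw [sum_insert_reindex V (fun T i => f (insert i T) * g T)]
  refine Finset.sum_congr rfl fun S _ => ?_
  rw [Finset.mul_sum]
  refine Finset.sum_congr rfl fun i hi => ?_
  rw [Finset.mem_inter] at hi
  rw [Finset.insert_erase hi.1]

/-- Pointwise commutator identity on subsets of `V`. -/
lemma DU_comm (V : Finset (Fin n)) (f : FF n) (S : Finset (Fin n)) (hS : S ⊆ V) :
    DV V (UV V f) S - UV V (DV V f) S = ((V.card : ℝ) - 2 * S.card) * f S := by
  have h1 : DV V (UV V f) S
      = ((V \ S).card : ℝ) * f S + ∑ j ∈ V \ S, ∑ i ∈ S, f (insert j (S.erase i)) := by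
    show (∑ j ∈ V \ S, UV V f (insert j S)) = _
    have : ∀ j ∈ V \ S, UV V f (insert j S) = f S + ∑ i ∈ S, f (insert j (S.erase i)) := by
      intro j hj
      rw [Finset.mem_sdiff] at hj
      unfold UV
      rw [Finset.inter_eq_left.mpr (Finset.insert_subset hj.1 hS),
        Finset.sum_insert hj.2, Finset.erase_insert hj.2]
      congr 1
      refine Finset.sum_congr rfl fun i hi => ?_
      rw [Finset.erase_insert_of_ne]
      rintro rfl; exact hj.2 hi
    rw [Finset.sum_congr rfl this, Finset.sum_add_distrib, Finset.sum_const, nsmul_eq_mul]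
  have h2 : UV V (DV V f) S
      = (S.card : ℝ) * f S + ∑ j ∈ V \ S, ∑ i ∈ S, f (insert j (S.erase i)) := by
    show (∑ i ∈ S ∩ V, DV V f (S.erase i)) = _
    rw [Finset.inter_eq_left.mpr hS]
    have : ∀ i ∈ S, DV V f (S.erase i) = f S + ∑ j ∈ V \ S, f (insert j (S.erase i)) := by
      intro i hi
      show (∑ j ∈ V \ S.erase i, f (insert j (S.erase i))) = _
      rw [Finset.sdiff_erase (hS hi), Finset.sum_insert (by simp [hi]),
        Finset.insert_erase hi]
    rw [Finset.sum_congr rfl this, Finset.sum_add_distrib, Finset.sum_const, nsmul_eq_mul,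
      Finset.sum_comm]
  rw [h1, h2]
  have hcard : ((V \ S).card : ℝ) = (V.card : ℝ) - S.card := by
    rw [Finset.card_sdiff_of_subset hS]
    push_cast [Nat.cast_sub (Finset.card_le_card hS)]
    ring
  rw [hcard]; ring

/-- Injectivity of the down operator above the middle layer. -/
lemma DV_injective (V : Finset (Fin n)) (t : ℕ) (f : FF n)
    (hsupp : ∀ S, f S ≠ 0 → S ⊆ V ∧ S.card = t)
    (hD : DV V f = 0) (hlt : V.card < 2 * t) : f = 0 := by
  have hUD : ∀ S, UV V (DV V f) S = 0 := by
    intro S; unfold UV; rw [hD]; simp [Pi.zero_apply]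
  have key : ip (UV V f) (UV V f) = ∑ S : Finset (Fin n),
      ((V.card : ℝ) - 2 * S.card) * (f S * f S) := by
    rw [← ip_adjoint V (UV V f) f]
    unfold ip
    refine Finset.sum_congr rfl fun S _ => ?_
    by_cases hfS : f S = 0
    · simp [hfS]
    · have := DU_comm V f S (hsupp S hfS).1
      rw [hUD S, sub_zero] at this
      rw [this]; ring
  have hnonneg : 0 ≤ ip (UV V f) (UV V f) :=
    Finset.sum_nonneg fun S _ => mul_self_nonneg _
  have hterm : ∀ S ∈ Finset.univ (α := Finset (Fin n)),
      ((V.card : ℝ) - 2 * S.card) * (f S * f S) ≤ 0 := by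
    intro S _
    by_cases hfS : f S = 0
    · simp [hfS]
    · have hc : ((V.card : ℝ) - 2 * S.card) < 0 := by
        have := (hsupp S hfS).2
        have : (V.card : ℝ) < 2 * S.card := by
          rw [this]; exact_mod_cast hlt
        linarith
      have : 0 < f S * f S := mul_self_pos.mpr hfS
      nlinarith
  have hzero : ∑ S : Finset (Fin n), ((V.card : ℝ) - 2 * S.card) * (f S * f S) = 0 := by
    have h1 : ip (UV V f) (UV V f) ≤ 0 := key ▸ Finset.sum_nonpos hterm
    linarith [key ▸ (le_antisymm h1 hnonneg)]
  have := (Finset.sum_eq_zero_iff_of_nonpos hterm).mp hzero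
  funext S
  by_contra hfS
  have hc : ((V.card : ℝ) - 2 * S.card) ≠ 0 := by
    have := (hsupp S hfS).2
    have : (V.card : ℝ) < 2 * S.card := by rw [this]; exact_mod_cast hlt
    linarith
  have := this S (Finset.mem_univ S)
  rcases mul_eq_zero.mp this with h | h
  · exact hc h
  · exact hfS (mul_self_eq_zero.mp h)


/-! ### Difference products -/

/-- Multiply (abstractly) by `X a - X b`. -/
def mulDiff (a b : Fin n) (f : FF n) : FF n := fun S =>
  (if a ∈ S ∧ b ∉ S then f (S.erase a) else 0) - (if b ∈ S ∧ a ∉ S then f (S.erase b) else 0)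

/-- Abstract difference product over a list of pairs. -/
def dProd : List (Fin n × Fin n) → FF n
  | [] => Pi.single ∅ 1
  | p :: l => mulDiff p.1 p.2 (dProd l)

/-- Disjointness of two pairs. -/
def pairDisj (p q : Fin n × Fin n) : Prop := p.1 ≠ q.1 ∧ p.1 ≠ q.2 ∧ p.2 ≠ q.1 ∧ p.2 ≠ q.2

/-- All `2t` coordinates pairwise distinct. -/
def goodList (l : List (Fin n × Fin n)) : Prop :=
  l.Pairwise pairDisj ∧ ∀ p ∈ l, p.1 ≠ p.2

/-- The set of coordinates used by a list of pairs. -/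
def coordsF (l : List (Fin n × Fin n)) : Finset (Fin n) :=
  (l.map Prod.fst).toFinset ∪ (l.map Prod.snd).toFinset

lemma mem_coordsF {x : Fin n} {l : List (Fin n × Fin n)} :
    x ∈ coordsF l ↔ ∃ p ∈ l, x = p.1 ∨ x = p.2 := by
  simp only [coordsF, Finset.mem_union, List.mem_toFinset, List.mem_map]
  constructor
  · rintro (⟨p, hp, rfl⟩ | ⟨p, hp, rfl⟩)
    · exact ⟨p, hp, Or.inl rfl⟩
    · exact ⟨p, hp, Or.inr rfl⟩
  · rintro ⟨p, hp, rfl | rfl⟩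
    · exact Or.inl ⟨p, hp, rfl⟩
    · exact Or.inr ⟨p, hp, rfl⟩

lemma coordsF_card_le (l : List (Fin n × Fin n)) : (coordsF l).card ≤ 2 * l.length := by
  refine (Finset.card_union_le _ _).trans ?_
  have h1 := List.toFinset_card_le (l.map Prod.fst)
  have h2 := List.toFinset_card_le (l.map Prod.snd)
  simp only [List.length_map] at h1 h2
  omega

lemma goodList_cons {p : Fin n × Fin n} {l : List (Fin n × Fin n)}
    (h : goodList (p :: l)) :
    goodList l ∧ p.1 ≠ p.2 ∧ p.1 ∉ coordsF l ∧ p.2 ∉ coordsF l := by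
  obtain ⟨hpw, hne⟩ := h
  rw [List.pairwise_cons] at hpw
  refine ⟨⟨hpw.2, fun q hq => hne q (List.mem_cons_of_mem _ hq)⟩,
    hne p (List.mem_cons_self), ?_, ?_⟩
  · rw [mem_coordsF]
    rintro ⟨q, hq, hx | hx⟩
    · exact (hpw.1 q hq).1 hx
    · exact (hpw.1 q hq).2.1 hx
  · rw [mem_coordsF]
    rintro ⟨q, hq, hx | hx⟩
    · exact (hpw.1 q hq).2.2.1 hx
    · exact (hpw.1 q hq).2.2.2 hx

/-- Support of a difference product. -/
lemma dProd_support : ∀ (l : List (Fin n × Fin n)) (S : Finset (Fin n)),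
    dProd l S ≠ 0 → S ⊆ coordsF l ∧ S.card = l.length := by
  intro l
  induction l with
  | nil =>
    intro S hS
    have : S = ∅ := by
      by_contra h
      simp [dProd, Pi.single_apply, h] at hS
    subst this
    simp
  | cons p l ih =>
    intro S hS
    have h2 : p.2 ∈ coordsF (p :: l) := mem_coordsF.mpr ⟨p, List.mem_cons_self, Or.inr rfl⟩
    have h1 : p.1 ∈ coordsF (p :: l) := mem_coordsF.mpr ⟨p, List.mem_cons_self, Or.inl rfl⟩
    have hsub : coordsF l ⊆ coordsF (p :: l) := by
      intro x hx
      rw [mem_coordsF] at hx ⊢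
      obtain ⟨q, hq, h⟩ := hx
      exact ⟨q, List.mem_cons_of_mem _ hq, h⟩
    have heq : dProd (p :: l) S = mulDiff p.1 p.2 (dProd l) S := rfl
    rw [heq] at hS
    unfold mulDiff at hS
    have key : ∀ (a b : Fin n), a ∈ coordsF (p :: l) → b ∈ coordsF (p :: l) →
        (if a ∈ S ∧ b ∉ S then dProd l (S.erase a) else 0) ≠ 0 →
        S ⊆ coordsF (p :: l) ∧ S.card = (p :: l).length := by
      intro a b haC hbC hA
      have hc : a ∈ S ∧ b ∉ S := by
        by_contra hc
        rw [if_neg hc] at hA; exact hA rfl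
      have hd : dProd l (S.erase a) ≠ 0 := by rwa [if_pos hc] at hA
      obtain ⟨hsub', hcard'⟩ := ih _ hd
      constructor
      · intro x hx
        by_cases hx1 : x = a
        · subst hx1; exact haC
        · exact hsub (hsub' (Finset.mem_erase.mpr ⟨hx1, hx⟩))
      · have h1le : 1 ≤ S.card := Finset.card_pos.mpr ⟨a, hc.1⟩
        have := Finset.card_erase_of_mem hc.1
        rw [List.length_cons, ← hcard']
        omega
    by_cases hA : (if p.1 ∈ S ∧ p.2 ∉ S then dProd l (S.erase p.1) else 0) ≠ 0
    · exact key p.1 p.2 h1 h2 hA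
    · push_neg at hA
      rw [hA, zero_sub, neg_ne_zero] at hS
      exact key p.2 p.1 h2 h1 hS

lemma zero_of_mem_left {a b : Fin n} {h : FF n}
    (hs : ∀ S, h S ≠ 0 → a ∉ S ∧ b ∉ S) {S : Finset (Fin n)} (hmem : a ∈ S) : h S = 0 := by
  by_contra hh; exact (hs S hh).1 hmem

lemma zero_of_mem_right {a b : Fin n} {h : FF n}
    (hs : ∀ S, h S ≠ 0 → a ∉ S ∧ b ∉ S) {S : Finset (Fin n)} (hmem : b ∈ S) : h S = 0 := by
  by_contra hh; exact (hs S hh).2 hmem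

/-- The abstract analogue of `W ((X a - X b) * h) = (X a - X b) * W h`
for `h` not involving the variables `a, b ∈ V`. -/
lemma DV_mulDiff (V : Finset (Fin n)) (a b : Fin n) (ha : a ∈ V) (hb : b ∈ V) (hab : a ≠ b)
    (h : FF n) (hs : ∀ S, h S ≠ 0 → a ∉ S ∧ b ∉ S) :
    DV V (mulDiff a b h) = mulDiff a b (DV V h) := by
  funext T
  show (∑ i ∈ V \ T, mulDiff a b h (insert i T)) = mulDiff a b (DV V h) T
  by_cases haT : a ∈ T <;> by_cases hbT : b ∈ T
  · -- a ∈ T, b ∈ T : both sides are 0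
    have hz : ∀ i ∈ V \ T, mulDiff a b h (insert i T) = 0 := by
      intro i _
      have e1 : ¬(a ∈ insert i T ∧ b ∉ insert i T) :=
        fun hc => hc.2 (Finset.mem_insert_of_mem hbT)
      have e2 : ¬(b ∈ insert i T ∧ a ∉ insert i T) :=
        fun hc => hc.2 (Finset.mem_insert_of_mem haT)
      unfold mulDiff
      rw [if_neg e1, if_neg e2, sub_zero]
    have e1 : ¬(a ∈ T ∧ b ∉ T) := fun hc => hc.2 hbT
    have e2 : ¬(b ∈ T ∧ a ∉ T) := fun hc => hc.2 haT
    rw [Finset.sum_congr rfl hz, Finset.sum_const, smul_zero]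
    unfold mulDiff
    rw [if_neg e1, if_neg e2, sub_zero]
  · -- a ∈ T, b ∉ T
    have hterm : ∀ i ∈ V \ T, mulDiff a b h (insert i T) = h (insert i (T.erase a)) := by
      intro i hi
      rw [Finset.mem_sdiff] at hi
      have hia : i ≠ a := fun hc => hi.2 (hc ▸ haT)
      have e2 : ¬(b ∈ insert i T ∧ a ∉ insert i T) :=
        fun hc => hc.2 (Finset.mem_insert_of_mem haT)
      unfold mulDiff
      rw [if_neg e2, sub_zero]
      by_cases hib : i = b
      · subst hib
        have e1 : ¬(a ∈ insert i T ∧ i ∉ insert i T) := by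
          rintro ⟨-, hc⟩; exact hc (Finset.mem_insert_self _ _)
        rw [if_neg e1]
        exact (zero_of_mem_right hs (Finset.mem_insert_self _ _)).symm
      · have e1 : a ∈ insert i T ∧ b ∉ insert i T := by
          refine ⟨Finset.mem_insert_of_mem haT, ?_⟩
          simp only [Finset.mem_insert]
          rintro (hc | hc)
          · exact hib hc.symm
          · exact hbT hc
        rw [if_pos e1, Finset.erase_insert_of_ne hia]
    have e1 : a ∈ T ∧ b ∉ T := ⟨haT, hbT⟩
    have e2 : ¬(b ∈ T ∧ a ∉ T) := fun hc => hc.2 haT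
    rw [Finset.sum_congr rfl hterm]
    unfold mulDiff
    rw [if_pos e1, if_neg e2, sub_zero]
    show _ = ∑ i ∈ V \ T.erase a, h (insert i (T.erase a))
    rw [Finset.sdiff_erase ha, Finset.sum_insert (by simp [haT]),
      Finset.insert_erase haT, zero_of_mem_left hs haT, zero_add]
  · -- b ∈ T, a ∉ T (symmetric)
    have hterm : ∀ i ∈ V \ T, mulDiff a b h (insert i T) = -h (insert i (T.erase b)) := by
      intro i hi
      rw [Finset.mem_sdiff] at hi
      have hib : i ≠ b := fun hc => hi.2 (hc ▸ hbT)
      have e1 : ¬(a ∈ insert i T ∧ b ∉ insert i T) :=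
        fun hc => hc.2 (Finset.mem_insert_of_mem hbT)
      unfold mulDiff
      rw [if_neg e1, zero_sub]
      by_cases hia : i = a
      · subst hia
        have e2 : ¬(b ∈ insert i T ∧ i ∉ insert i T) := by
          rintro ⟨-, hc⟩; exact hc (Finset.mem_insert_self _ _)
        rw [if_neg e2, zero_of_mem_left hs (Finset.mem_insert_self _ _), neg_zero]
      · have e2 : b ∈ insert i T ∧ a ∉ insert i T := by
          refine ⟨Finset.mem_insert_of_mem hbT, ?_⟩
          simp only [Finset.mem_insert]
          rintro (hc | hc)
          · exact hia hc.symm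
          · exact haT hc
        rw [if_pos e2, Finset.erase_insert_of_ne hib]
    have e2 : b ∈ T ∧ a ∉ T := ⟨hbT, haT⟩
    rw [Finset.sum_congr rfl hterm]
    unfold mulDiff
    rw [if_neg (show ¬(a ∈ T ∧ b ∉ T) from fun hc => haT hc.1), if_pos e2, zero_sub]
    show _ = -∑ i ∈ V \ T.erase b, h (insert i (T.erase b))
    rw [Finset.sdiff_erase hb, Finset.sum_insert (by simp [hbT]),
      Finset.insert_erase hbT, zero_of_mem_right hs hbT, zero_add, ← Finset.sum_neg_distrib]
  · -- a ∉ T, b ∉ T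
    have hterm : ∀ i ∈ V \ T, mulDiff a b h (insert i T)
        = (if i = a then h T else 0) - (if i = b then h T else 0) := by
      intro i hi
      rw [Finset.mem_sdiff] at hi
      unfold mulDiff
      congr 1
      · by_cases hia : i = a
        · subst hia
          have e1 : i ∈ insert i T ∧ b ∉ insert i T := by
            refine ⟨Finset.mem_insert_self _ _, ?_⟩
            simp only [Finset.mem_insert]
            rintro (hc | hc)
            · exact hab hc.symm
            · exact hbT hc
          rw [if_pos e1, if_pos rfl, Finset.erase_insert hi.2]
        · have e1 : ¬(a ∈ insert i T ∧ b ∉ insert i T) := by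
            rintro ⟨hc, -⟩
            simp only [Finset.mem_insert] at hc
            rcases hc with hc | hc
            · exact hia hc.symm
            · exact haT hc
          rw [if_neg e1, if_neg hia]
      · by_cases hib : i = b
        · subst hib
          have e2 : i ∈ insert i T ∧ a ∉ insert i T := by
            refine ⟨Finset.mem_insert_self _ _, ?_⟩
            simp only [Finset.mem_insert]
            rintro (hc | hc)
            · exact hab hc
            · exact haT hc
          rw [if_pos e2, if_pos rfl, Finset.erase_insert hi.2]
        · have e2 : ¬(b ∈ insert i T ∧ a ∉ insert i T) := by
            rintro ⟨hc, -⟩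
            simp only [Finset.mem_insert] at hc
            rcases hc with hc | hc
            · exact hib hc.symm
            · exact hbT hc
          rw [if_neg e2, if_neg hib]
    have e1 : ¬(a ∈ T ∧ b ∉ T) := fun hc => haT hc.1
    have e2 : ¬(b ∈ T ∧ a ∉ T) := fun hc => hbT hc.1
    rw [Finset.sum_congr rfl hterm, Finset.sum_sub_distrib,
      Finset.sum_ite_eq' (V \ T) a, Finset.sum_ite_eq' (V \ T) b,
      if_pos (Finset.mem_sdiff.mpr ⟨ha, haT⟩), if_pos (Finset.mem_sdiff.mpr ⟨hb, hbT⟩),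
      sub_self]
    unfold mulDiff
    rw [if_neg e1, if_neg e2, sub_zero]

lemma mulDiff_zero (a b : Fin n) : mulDiff a b (0 : FF n) = 0 := by
  funext S; unfold mulDiff; simp

/-- Difference products are in the kernel of the down operator. -/
lemma DV_dProd (V : Finset (Fin n)) : ∀ (l : List (Fin n × Fin n)), goodList l →
    (∀ p ∈ l, p.1 ∈ V ∧ p.2 ∈ V) → DV V (dProd l) = 0 := by
  intro l
  induction l with
  | nil =>
    intro _ _
    funext T
    show (∑ i ∈ V \ T, dProd ([] : List (Fin n × Fin n)) (insert i T)) = (0 : ℝ)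
    refine Finset.sum_eq_zero fun i _ => ?_
    simp [dProd, Pi.single_apply, Finset.insert_ne_empty]
  | cons p l ih =>
    intro hg hV
    obtain ⟨hgl, hne, h1, h2⟩ := goodList_cons hg
    have hs : ∀ S, dProd l S ≠ 0 → p.1 ∉ S ∧ p.2 ∉ S := by
      intro S hS
      have := (dProd_support l S hS).1
      exact ⟨fun hc => h1 (this hc), fun hc => h2 (this hc)⟩
    have hpV := hV p (List.mem_cons_self)
    show DV V (mulDiff p.1 p.2 (dProd l)) = 0
    rw [DV_mulDiff V p.1 p.2 hpV.1 hpV.2 hne (dProd l) hs,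
      ih hgl (fun q hq => hV q (List.mem_cons_of_mem _ hq)), mulDiff_zero]

/-! ### The spanning theorem in the abstract setting -/

/-- Generators: difference products over `t` disjoint pairs from `V`. -/
def Gset (t : ℕ) (V : Finset (Fin n)) : Set (FF n) :=
  {g | ∃ l : List (Fin n × Fin n), l.length = t ∧ goodList l ∧
    (∀ p ∈ l, p.1 ∈ V ∧ p.2 ∈ V) ∧ g = dProd l}

lemma Gset_mono {t : ℕ} {V V' : Finset (Fin n)} (h : V' ⊆ V) : Gset t V' ⊆ Gset t V := by
  rintro g ⟨l, hlen, hg, hV, rfl⟩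
  exact ⟨l, hlen, hg, fun p hp => ⟨h (hV p hp).1, h (hV p hp).2⟩, rfl⟩

lemma span_Gset_le_ker (t : ℕ) (V : Finset (Fin n)) :
    Submodule.span ℝ (Gset t V) ≤ LinearMap.ker (DV V) := by
  rw [Submodule.span_le]
  rintro g ⟨l, hlen, hg, hV, rfl⟩
  exact LinearMap.mem_ker.mpr (DV_dProd V l hg hV)

/-- The lifting lemma: given `q` in the span for `(t, V \ {v})`, produce `g` in the span
for `(t+1, V)` whose `v`-slice is `q`. -/
lemma lift_lemma (t : ℕ) (V : Finset (Fin n)) (v : Fin n) (hv : v ∈ V)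
    (hcard : 2 * t + 2 ≤ V.card) (q : FF n)
    (hq : q ∈ Submodule.span ℝ (Gset t (V.erase v))) :
    ∃ g ∈ Submodule.span ℝ (Gset (t+1) V),
      (∀ S, v ∈ S → g S = q (S.erase v)) ∧ (∀ S, g S ≠ 0 → S ⊆ V ∧ S.card = t + 1) := by
  induction hq using Submodule.span_induction with
  | zero => exact ⟨0, Submodule.zero_mem _, fun S _ => rfl, fun S hS => absurd rfl hS⟩
  | add x y hx hy ihx ihy =>
    obtain ⟨g1, hg1, hg1v, hg1s⟩ := ihx
    obtain ⟨g2, hg2, hg2v, hg2s⟩ := ihy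
    refine ⟨g1 + g2, Submodule.add_mem _ hg1 hg2, fun S hS => ?_, fun S hS => ?_⟩
    · show g1 S + g2 S = (x + y) (S.erase v)
      rw [hg1v S hS, hg2v S hS]; rfl
    · have : g1 S ≠ 0 ∨ g2 S ≠ 0 := by
        by_contra hc
        push_neg at hc
        exact hS (by show g1 S + g2 S = 0; rw [hc.1, hc.2, add_zero])
      rcases this with h | h
      · exact hg1s S h
      · exact hg2s S h
  | smul c x hx ihx =>
    obtain ⟨g, hg, hgv, hgs⟩ := ihx
    refine ⟨c • g, Submodule.smul_mem _ _ hg, fun S hS => ?_, fun S hS => ?_⟩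
    · show c * g S = c * x (S.erase v)
      rw [hgv S hS]
    · refine hgs S fun hc => hS ?_
      show c * g S = 0
      rw [hc, mul_zero]
  | mem x hx =>
    obtain ⟨l, hlen, hg, hVl, rfl⟩ := hx
    -- choose a fresh index j
    have hnotsub : ¬ (V.erase v ⊆ coordsF l) := by
      intro hsub
      have h1 := Finset.card_le_card hsub
      have h2 := coordsF_card_le l
      have h3 : (V.erase v).card = V.card - 1 := Finset.card_erase_of_mem hv
      omega
    obtain ⟨j, hjV, hjC⟩ := Finset.not_subset.mp hnotsub
    have hjv : j ≠ v := Finset.ne_of_mem_erase hjV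
    have hvC : v ∉ coordsF l := by
      intro hc
      rw [mem_coordsF] at hc
      obtain ⟨p, hp, hc⟩ := hc
      rcases hc with hc | hc
      · exact Finset.notMem_erase v V (hc ▸ (hVl p hp).1)
      · exact Finset.notMem_erase v V (hc ▸ (hVl p hp).2)
    have hgood : goodList ((v, j) :: l) := by
      constructor
      · rw [List.pairwise_cons]
        refine ⟨fun p hp => ?_, hg.1⟩
        have hp1 : p.1 ∈ coordsF l := mem_coordsF.mpr ⟨p, hp, Or.inl rfl⟩
        have hp2 : p.2 ∈ coordsF l := mem_coordsF.mpr ⟨p, hp, Or.inr rfl⟩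
        exact ⟨fun hc => hvC (by rw [← hc] at hp1; exact hp1),
          fun hc => hvC (by rw [← hc] at hp2; exact hp2),
          fun hc => hjC (by rw [← hc] at hp1; exact hp1),
          fun hc => hjC (by rw [← hc] at hp2; exact hp2)⟩
      · intro p hp
        rcases List.mem_cons.mp hp with rfl | hp'
        · exact fun hc => hjv hc.symm
        · exact hg.2 _ hp' 
    have hVl' : ∀ p ∈ (v, j) :: l, p.1 ∈ V ∧ p.2 ∈ V := by
      intro p hp
      rcases List.mem_cons.mp hp with rfl | hp'
      · exact ⟨hv, Finset.mem_of_mem_erase hjV⟩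
      · exact ⟨Finset.mem_of_mem_erase (hVl p hp').1, Finset.mem_of_mem_erase (hVl p hp').2⟩
    refine ⟨dProd ((v, j) :: l), Submodule.subset_span
      ⟨(v, j) :: l, by simp [hlen], hgood, hVl', rfl⟩, fun S hS => ?_, fun S hS => ?_⟩
    · show mulDiff v j (dProd l) S = dProd l (S.erase v)
      unfold mulDiff
      have e2 : ¬(j ∈ S ∧ v ∉ S) := fun hc => hc.2 hS
      rw [if_neg e2, sub_zero]
      by_cases hjS : j ∈ S
      · have e1 : ¬(v ∈ S ∧ j ∉ S) := fun hc => hc.2 hjS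
        rw [if_neg e1]
        by_contra hne
        have hd : dProd l (S.erase v) ≠ 0 := fun hc => hne hc.symm
        have := (dProd_support l _ hd).1 (Finset.mem_erase.mpr ⟨hjv, hjS⟩)
        exact hjC this
      · rw [if_pos ⟨hS, hjS⟩]
    · obtain ⟨hsub, hcard'⟩ := dProd_support _ S hS
      constructor
      · intro x hx
        have := hsub hx
        rw [mem_coordsF] at this
        obtain ⟨p, hp, hc⟩ := this
        rcases hc with hc | hc
        · exact hc ▸ (hVl' p hp).1
        · exact hc ▸ (hVl' p hp).2
      · rw [hcard']; simp [hlen]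

/-- Main spanning lemma: the kernel of `DV V` on layer `t` is spanned by
difference products. -/
lemma main_span : ∀ (t : ℕ) (V : Finset (Fin n)) (f : FF n),
    (∀ S, f S ≠ 0 → S ⊆ V ∧ S.card = t) → DV V f = 0 →
    f ∈ Submodule.span ℝ (Gset t V) := by
  intro t
  induction t with
  | zero =>
    intro V f hsupp _
    have hf : f = f ∅ • dProd [] := by
      funext S
      by_cases hS : S = ∅
      · subst hS; simp [dProd, Pi.single_apply]
      · have h0 : f S = 0 := by
          by_contra h
          exact hS (Finset.card_eq_zero.mp (hsupp S h).2)
        simp [h0, dProd, Pi.single_apply, hS]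
    rw [hf]
    exact Submodule.smul_mem _ _ (Submodule.subset_span
      ⟨[], rfl, ⟨List.Pairwise.nil, by simp⟩, by simp, rfl⟩)
  | succ t iht =>
    intro V
    induction V using Finset.strongInduction with
    | _ V ihV =>
      intro f hsupp hD
      by_cases hbig : V.card < 2 * (t + 1)
      · rw [DV_injective V (t + 1) f hsupp hD hbig]
        exact Submodule.zero_mem _
      · push_neg at hbig
        have hVpos : 0 < V.card := by omega
        obtain ⟨v, hv⟩ := Finset.card_pos.mp hVpos
        set q : FF n := fun S => if v ∈ S then 0 else f (insert v S) with hq_def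
        have hq_supp : ∀ S, q S ≠ 0 → S ⊆ V.erase v ∧ S.card = t := by
          intro S hS
          have hvS : v ∉ S := by
            intro hc
            apply hS
            show (if v ∈ S then 0 else f (insert v S)) = 0
            rw [if_pos hc]
          have hfS : f (insert v S) ≠ 0 := by
            intro hc
            apply hS
            show (if v ∈ S then 0 else f (insert v S)) = 0
            rw [if_neg hvS, hc]
          obtain ⟨hsub, hcard'⟩ := hsupp _ hfS
          constructor
          · intro x hx
            exact Finset.mem_erase.mpr ⟨fun hc => hvS (hc ▸ hx), hsub (Finset.mem_insert_of_mem hx)⟩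
          · rw [Finset.card_insert_of_notMem hvS] at hcard'
            omega
        have hq_D : DV (V.erase v) q = 0 := by
          funext T
          show (∑ i ∈ (V.erase v) \ T, q (insert i T)) = (0 : ℝ)
          by_cases hvT : v ∈ T
          · refine Finset.sum_eq_zero fun i _ => ?_
            show (if v ∈ insert i T then 0 else f (insert v (insert i T))) = 0
            rw [if_pos (Finset.mem_insert_of_mem hvT)]
          · have hidx : (V.erase v) \ T = V \ insert v T := by
              ext i
              simp only [Finset.mem_sdiff, Finset.mem_erase, Finset.mem_insert]
              tauto
            have hterm : ∀ i ∈ (V.erase v) \ T, q (insert i T) = f (insert i (insert v T)) := by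
              intro i hi
              simp only [Finset.mem_sdiff, Finset.mem_erase] at hi
              have : v ∉ insert i T := by
                simp only [Finset.mem_insert]
                rintro (hc | hc)
                · exact hi.1.1 hc.symm
                · exact hvT hc
              show (if v ∈ insert i T then 0 else f (insert v (insert i T))) = _
              rw [if_neg this, Finset.insert_comm]
            rw [Finset.sum_congr rfl hterm, Finset.sum_congr hidx (fun _ _ => rfl)]
            exact congrFun hD (insert v T)
        have hq_mem := iht (V.erase v) q hq_supp hq_D
        obtain ⟨g, hg_mem, hg_v, hg_supp⟩ :=
          lift_lemma t V v hv (by omega) q hq_mem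
        have hDg : DV V g = 0 := LinearMap.mem_ker.mp (span_Gset_le_ker (t+1) V hg_mem)
        set f' : FF n := f - g with hf'_def
        have hf'_v : ∀ S, v ∈ S → f' S = 0 := by
          intro S hS
          show f S - g S = 0
          rw [hg_v S hS]
          have : q (S.erase v) = f S := by
            show (if v ∈ S.erase v then 0 else f (insert v (S.erase v))) = f S
            rw [if_neg (Finset.notMem_erase _ _), Finset.insert_erase hS]
          rw [this, sub_self]
        have hf'_supp : ∀ S, f' S ≠ 0 → S ⊆ V.erase v ∧ S.card = t + 1 := by
          intro S hS
          have hvS : v ∉ S := fun hc => hS (hf'_v S hc)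
          have : f S ≠ 0 ∨ g S ≠ 0 := by
            by_contra hc
            push_neg at hc
            exact hS (by show f S - g S = 0; rw [hc.1, hc.2, sub_zero])
          have hSV : S ⊆ V ∧ S.card = t + 1 := by
            rcases this with h | h
            · exact hsupp S h
            · exact hg_supp S h
          exact ⟨fun x hx => Finset.mem_erase.mpr ⟨fun hc => hvS (hc ▸ hx), hSV.1 hx⟩, hSV.2⟩
        have hDf' : DV V f' = 0 := by
          rw [hf'_def, map_sub, hD, hDg, sub_zero]
        have hf'_D : DV (V.erase v) f' = 0 := by
          funext T
          show (∑ i ∈ (V.erase v) \ T, f' (insert i T)) = (0 : ℝ)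
          by_cases hvT : v ∈ T
          · have hidx : (V.erase v) \ T = V \ T := by
              ext i
              simp only [Finset.mem_sdiff, Finset.mem_erase]
              constructor
              · rintro ⟨⟨_, h1⟩, h2⟩; exact ⟨h1, h2⟩
              · rintro ⟨h1, h2⟩; exact ⟨⟨fun hc => h2 (hc ▸ hvT), h1⟩, h2⟩
            rw [Finset.sum_congr hidx (fun _ _ => rfl)]
            exact congrFun hDf' T
          · have hsplit : V \ T = insert v ((V.erase v) \ T) := by
              ext i
              simp only [Finset.mem_sdiff, Finset.mem_insert, Finset.mem_erase]
              constructor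
              · rintro ⟨h1, h2⟩
                by_cases hc : i = v
                · exact Or.inl hc
                · exact Or.inr ⟨⟨hc, h1⟩, h2⟩
              · rintro (rfl | ⟨⟨h1, h2⟩, h3⟩)
                · exact ⟨hv, hvT⟩
                · exact ⟨h2, h3⟩
            have h0 := congrFun hDf' T
            have : (∑ i ∈ V \ T, f' (insert i T)) = (0 : ℝ) := h0
            rw [hsplit, Finset.sum_insert (by simp [Finset.notMem_erase])] at this
            rw [hf'_v (insert v T) (Finset.mem_insert_self _ _), zero_add] at this
            exact this
        have hf'_mem : f' ∈ Submodule.span ℝ (Gset (t+1) (V.erase v)) :=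
          ihV (V.erase v) (Finset.erase_ssubset hv) f' hf'_supp hf'_D
        have hf'_mem' : f' ∈ Submodule.span ℝ (Gset (t+1) V) :=
          Submodule.span_mono (Gset_mono (Finset.erase_subset _ _)) hf'_mem
        have : f = f' + g := by rw [hf'_def, sub_add_cancel]
        rw [this]
        exact Submodule.add_mem _ hf'_mem' hg_mem

/-! ### Connection with multivariate polynomials -/

/-- Exponent vector of the multilinear monomial `x^S`. -/
def expS (S : Finset (Fin n)) : Fin n →₀ ℕ := ∑ i ∈ S, Finsupp.single i 1

lemma expS_apply (S : Finset (Fin n)) (j : Fin n) :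
    expS S j = if j ∈ S then 1 else 0 := by
  unfold expS
  rw [Finsupp.finset_sum_apply]
  by_cases hj : j ∈ S
  · rw [if_pos hj, Finset.sum_eq_single_of_mem j hj
      (fun i _ hij => Finsupp.single_eq_of_ne' hij), Finsupp.single_eq_same]
  · rw [if_neg hj]
    exact Finset.sum_eq_zero fun i hi => Finsupp.single_eq_of_ne' (fun hc => hj (hc ▸ hi))

lemma expS_inj : Function.Injective (expS (n := n)) := by
  intro S T h
  ext j
  have := congrArg (fun g => g j) h
  simp only [expS_apply] at this
  constructor <;> intro hj
  · by_contra hc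
    rw [if_pos hj, if_neg hc] at this; exact one_ne_zero this
  · by_contra hc
    rw [if_neg hc, if_pos hj] at this; exact one_ne_zero this.symm

lemma prodX_eq_monomial (S : Finset (Fin n)) :
    (∏ i ∈ S, X i : MvPolynomial (Fin n) ℝ) = monomial (expS S) 1 := by
  induction S using Finset.induction_on with
  | empty => simp [expS]
  | insert _ _ ha =>
    rename_i a s ih
    rw [Finset.prod_insert ha, ih,
      show (X a : MvPolynomial (Fin n) ℝ) = monomial (Finsupp.single a 1) 1 from rfl,
      monomial_mul, one_mul]
    congr 1
    unfold expS
    rw [Finset.sum_insert ha]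

lemma coeff_prodX (S T : Finset (Fin n)) :
    coeff (expS T) (∏ i ∈ S, X i : MvPolynomial (Fin n) ℝ) = if S = T then 1 else 0 := by
  rw [prodX_eq_monomial, coeff_monomial]
  by_cases h : S = T
  · rw [if_pos h, if_pos (congrArg expS h)]
  · rw [if_neg h, if_neg (fun hc => h (expS_inj hc))]

/-- From coefficients to polynomials. -/
def Phi : FF n →ₗ[ℝ] MvPolynomial (Fin n) ℝ where
  toFun f := ∑ S : Finset (Fin n), f S • ∏ i ∈ S, X i
  map_add' f g := by simp [add_smul, Finset.sum_add_distrib]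
  map_smul' c f := by simp [smul_smul, Finset.smul_sum]

lemma Phi_apply (f : FF n) : Phi f = ∑ S : Finset (Fin n), f S • ∏ i ∈ S, X i := rfl

lemma coeff_Phi (f : FF n) (T : Finset (Fin n)) : coeff (expS T) (Phi f) = f T := by
  rw [Phi_apply, coeff_sum]
  rw [Finset.sum_eq_single T
    (fun S _ hST => by rw [coeff_smul, coeff_prodX, if_neg hST, smul_zero])
    (fun hT => absurd (Finset.mem_univ T) hT)]
  rw [coeff_smul, coeff_prodX, if_pos rfl, smul_eq_mul, mul_one]

lemma Phi_inj : Function.Injective (Phi (n := n)) := by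
  intro f g h
  funext T
  rw [← coeff_Phi f T, ← coeff_Phi g T, h]

lemma Phi_single (S : Finset (Fin n)) : Phi (Pi.single S (1:ℝ)) = ∏ i ∈ S, X i := by
  rw [Phi_apply]
  rw [Finset.sum_eq_single S
    (fun T _ hTS => by rw [Pi.single_eq_of_ne hTS, zero_smul])
    (fun hS => absurd (Finset.mem_univ S) hS)]
  rw [Pi.single_eq_same, one_smul]

lemma pderiv_prodX (j : Fin n) (S : Finset (Fin n)) :
    pderiv j (∏ i ∈ S, X i : MvPolynomial (Fin n) ℝ)
      = if j ∈ S then ∏ i ∈ S.erase j, X i else 0 := by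
  induction S using Finset.induction_on with
  | empty => simp
  | insert _ _ ha =>
    rename_i a s ih
    rw [Finset.prod_insert ha, pderiv_mul, ih, pderiv_X]
    by_cases hja : j = a
    · subst hja
      rw [Pi.single_eq_same, if_neg ha, if_pos (Finset.mem_insert_self _ _),
        Finset.erase_insert ha]
      simp
    · rw [Pi.single_eq_of_ne (fun hc => hja hc.symm)]
      by_cases hjs : j ∈ s
      · rw [if_pos hjs, if_pos (Finset.mem_insert_of_mem hjs),
          Finset.erase_insert_of_ne (fun hc => hja hc.symm), Finset.prod_insert
            (fun hc => ha (Finset.mem_of_mem_erase hc))]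
        simp
      · rw [if_neg hjs, if_neg (by
          simp only [Finset.mem_insert]
          rintro (hc | hc)
          · exact hja hc
          · exact hjs hc)]
        simp

lemma Wop_prodX (S : Finset (Fin n)) :
    Wop n (∏ i ∈ S, X i) = ∑ i ∈ S, ∏ k ∈ S.erase i, X k := by
  have h0 : Wop n (∏ i ∈ S, X i) = ∑ j : Fin n, pderiv j (∏ i ∈ S, X i) := by
    rw [Wop, LinearMap.sum_apply]; rfl
  rw [h0, Finset.sum_congr rfl (fun j _ => pderiv_prodX j S), Finset.sum_ite_mem,
    Finset.univ_inter]

/-- Intertwining: `W ∘ Φ = Φ ∘ D`. -/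
lemma Wop_Phi (f : FF n) : Wop n (Phi f) = Phi (DV Finset.univ f) := by
  rw [Phi_apply, map_sum]
  have h1 : ∀ S : Finset (Fin n), Wop n (f S • ∏ i ∈ S, X i)
      = ∑ i ∈ S ∩ Finset.univ, f S • ∏ k ∈ S.erase i, X k := by
    intro S
    rw [map_smul, Wop_prodX, Finset.smul_sum, Finset.inter_univ]
  rw [Finset.sum_congr rfl (fun S _ => h1 S)]
  have h2 : Phi (DV Finset.univ f)
      = ∑ T : Finset (Fin n), ∑ i ∈ Finset.univ \ T, f (insert i T) • ∏ k ∈ T, X k := by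
    rw [Phi_apply]
    refine Finset.sum_congr rfl fun T _ => ?_
    show (∑ i ∈ Finset.univ \ T, f (insert i T)) • _ = _
    rw [Finset.sum_smul]
  rw [h2, sum_insert_reindex Finset.univ
    (fun T i => f (insert i T) • ∏ k ∈ T, X k : Finset (Fin n) → Fin n → MvPolynomial (Fin n) ℝ)]
  refine Finset.sum_congr rfl fun S _ => Finset.sum_congr rfl fun i hi => ?_
  rw [Finset.mem_inter] at hi
  rw [Finset.insert_erase hi.1]

lemma mulDiff_single {a b : Fin n} (hab : a ≠ b) {T : Finset (Fin n)}
    (ha : a ∉ T) (hb : b ∉ T) :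
    mulDiff a b (Pi.single T (1:ℝ))
      = Pi.single (insert a T) (1:ℝ) - Pi.single (insert b T) (1:ℝ) := by
  have hne : insert a T ≠ insert b T := by
    intro hc
    have : a ∈ insert b T := hc ▸ Finset.mem_insert_self a T
    rcases Finset.mem_insert.mp this with h | h
    · exact hab h
    · exact ha h
  funext S
  show (if a ∈ S ∧ b ∉ S then (Pi.single T 1 : FF n) (S.erase a) else 0)
      - (if b ∈ S ∧ a ∉ S then (Pi.single T 1 : FF n) (S.erase b) else 0)
      = (Pi.single (insert a T) 1 : FF n) S - (Pi.single (insert b T) 1 : FF n) S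
  by_cases hSa : S = insert a T
  · subst hSa
    have hc1 : a ∈ insert a T ∧ b ∉ insert a T := by
      refine ⟨Finset.mem_insert_self _ _, ?_⟩
      simp only [Finset.mem_insert]
      rintro (hc | hc)
      · exact hab hc.symm
      · exact hb hc
    have hc2 : ¬(b ∈ insert a T ∧ a ∉ insert a T) :=
      fun hc => hc.2 (Finset.mem_insert_self _ _)
    rw [if_pos hc1, if_neg hc2, sub_zero, Finset.erase_insert ha, Pi.single_eq_same,
      Pi.single_eq_same, Pi.single_eq_of_ne hne, sub_zero]
  · by_cases hSb : S = insert b T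
    · subst hSb
      have hc1 : ¬(a ∈ insert b T ∧ b ∉ insert b T) :=
        fun hc => hc.2 (Finset.mem_insert_self _ _)
      have hc2 : b ∈ insert b T ∧ a ∉ insert b T := by
        refine ⟨Finset.mem_insert_self _ _, ?_⟩
        simp only [Finset.mem_insert]
        rintro (hc | hc)
        · exact hab hc
        · exact ha hc
      rw [if_pos hc2, if_neg hc1, zero_sub, Finset.erase_insert hb, Pi.single_eq_same,
        Pi.single_eq_same, Pi.single_eq_of_ne (fun hc => hne hc.symm), zero_sub]
    · have e1 : (if a ∈ S ∧ b ∉ S then (Pi.single T 1 : FF n) (S.erase a) else 0) = 0 := by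
        by_cases hc : a ∈ S ∧ b ∉ S
        · rw [if_pos hc, Pi.single_apply, if_neg]
          intro heq
          exact hSa (by rw [← heq, Finset.insert_erase hc.1])
        · rw [if_neg hc]
      have e2 : (if b ∈ S ∧ a ∉ S then (Pi.single T 1 : FF n) (S.erase b) else 0) = 0 := by
        by_cases hc : b ∈ S ∧ a ∉ S
        · rw [if_pos hc, Pi.single_apply, if_neg]
          intro heq
          exact hSb (by rw [← heq, Finset.insert_erase hc.1])
        · rw [if_neg hc]
      rw [e1, e2, Pi.single_eq_of_ne hSa, Pi.single_eq_of_ne hSb, sub_self]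

lemma mulDiff_smul (a b : Fin n) (c : ℝ) (f : FF n) :
    mulDiff a b (c • f) = c • mulDiff a b f := by
  funext S
  show (if a ∈ S ∧ b ∉ S then (c • f) (S.erase a) else 0)
      - (if b ∈ S ∧ a ∉ S then (c • f) (S.erase b) else 0)
      = c • (mulDiff a b f S)
  unfold mulDiff
  simp only [Pi.smul_apply, smul_eq_mul]
  split <;> split <;> ring

lemma mulDiff_sum {ι : Type*} (s : Finset ι) (a b : Fin n) (F : ι → FF n) :
    mulDiff a b (∑ i ∈ s, F i) = ∑ i ∈ s, mulDiff a b (F i) := by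
  funext S
  show (if a ∈ S ∧ b ∉ S then (∑ i ∈ s, F i) (S.erase a) else 0)
      - (if b ∈ S ∧ a ∉ S then (∑ i ∈ s, F i) (S.erase b) else 0)
      = (∑ i ∈ s, mulDiff a b (F i)) S
  rw [show (∑ i ∈ s, mulDiff a b (F i)) S = ∑ i ∈ s, mulDiff a b (F i) S from
    Finset.sum_apply S s _]
  unfold mulDiff
  rw [Finset.sum_sub_distrib]
  congr 1 <;> (split <;> simp [Finset.sum_apply])

lemma Phi_mulDiff (a b : Fin n) (hab : a ≠ b) (h : FF n)
    (hs : ∀ S, h S ≠ 0 → a ∉ S ∧ b ∉ S) :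
    Phi (mulDiff a b h) = (X a - X b) * Phi h := by
  have hdecomp : h = ∑ T : Finset (Fin n), Pi.single T (h T) := (Finset.univ_sum_single h).symm
  rw [hdecomp, mulDiff_sum, map_sum, map_sum, Finset.mul_sum]
  refine Finset.sum_congr rfl fun T _ => ?_
  by_cases hT : h T = 0
  · rw [hT]
    have : Pi.single T (0:ℝ) = (0 : FF n) := Pi.single_zero T
    rw [this, mulDiff_zero, map_zero, mul_zero]
  · have hsingle : (Pi.single T (h T) : FF n) = h T • (Pi.single T 1 : FF n) := by
      funext S
      rw [Pi.single_apply, Pi.smul_apply, Pi.single_apply]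
      split <;> simp
    obtain ⟨haT, hbT⟩ := hs T hT
    rw [hsingle, mulDiff_smul, mulDiff_single hab haT hbT, map_smul, map_smul, map_sub,
      Phi_single, Phi_single, Phi_single, Finset.prod_insert haT, Finset.prod_insert hbT,
      ← sub_mul, mul_smul_comm]

lemma Phi_dProd : ∀ (l : List (Fin n × Fin n)), goodList l →
    Phi (dProd l) = (l.map fun p => (X p.1 - X p.2 : MvPolynomial (Fin n) ℝ)).prod := by
  intro l
  induction l with
  | nil =>
    intro _
    show Phi (Pi.single ∅ 1) = 1
    rw [Phi_single, Finset.prod_empty]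
  | cons p l ih =>
    intro hg
    obtain ⟨hgl, hne, h1, h2⟩ := goodList_cons hg
    have hs : ∀ S, dProd l S ≠ 0 → p.1 ∉ S ∧ p.2 ∉ S := by
      intro S hS
      have := (dProd_support l S hS).1
      exact ⟨fun hc => h1 (this hc), fun hc => h2 (this hc)⟩
    show Phi (mulDiff p.1 p.2 (dProd l)) = _
    rw [Phi_mulDiff p.1 p.2 hne (dProd l) hs, ih hgl, List.map_cons, List.prod_cons]

/-- Coefficient functions supported on `t`-sets. -/
def Vsub (t : ℕ) : Submodule ℝ (FF n) where
  carrier := {f | ∀ S, f S ≠ 0 → S.card = t}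
  zero_mem' := fun S hS => absurd rfl hS
  add_mem' := by
    intro f g hf hg S hS
    by_cases h : f S = 0
    · refine hg S fun hc => hS ?_
      show f S + g S = 0
      rw [h, hc, add_zero]
    · exact hf S h
  smul_mem' := by
    intro c f hf S hS
    refine hf S fun hc => hS ?_
    show c * f S = 0
    rw [hc, mul_zero]

lemma homogML_eq (t : ℕ) : homogML n t = Submodule.map (Phi (n := n)) (Vsub t) := by
  apply le_antisymm
  · rw [homogML, Submodule.span_le]
    rintro p ⟨S, hcard, rfl⟩
    refine ⟨Pi.single S 1, fun T hT => ?_, Phi_single S⟩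
    by_cases h : T = S
    · subst h; exact hcard
    · exact absurd (Pi.single_eq_of_ne h 1) hT
  · rintro p ⟨f, hf, rfl⟩
    rw [Phi_apply]
    refine Submodule.sum_mem _ fun S _ => ?_
    by_cases h : f S = 0
    · rw [h, zero_smul]; exact Submodule.zero_mem _
    · exact Submodule.smul_mem _ _ (Submodule.subset_span ⟨S, hf S h, rfl⟩)

lemma inter_eq (t : ℕ) :
    homogML n t ⊓ LinearMap.ker (Wop n)
      = Submodule.map (Phi (n := n)) (Vsub t ⊓ LinearMap.ker (DV Finset.univ)) := by
  ext p
  constructor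
  · rintro ⟨hp1, hp2⟩
    rw [homogML_eq] at hp1
    obtain ⟨f, hf, rfl⟩ := hp1
    refine ⟨f, ⟨hf, LinearMap.mem_ker.mpr ?_⟩, rfl⟩
    apply Phi_inj
    rw [map_zero, ← Wop_Phi]
    exact LinearMap.mem_ker.mp hp2
  · rintro ⟨f, ⟨hf1, hf2⟩, rfl⟩
    refine ⟨homogML_eq t ▸ ⟨f, hf1, rfl⟩, LinearMap.mem_ker.mpr ?_⟩
    rw [Wop_Phi, LinearMap.mem_ker.mp hf2, map_zero]

lemma abstract_ker_eq (t : ℕ) :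
    Vsub (n := n) t ⊓ LinearMap.ker (DV Finset.univ)
      = Submodule.span ℝ (Gset t Finset.univ) := by
  apply le_antisymm
  · rintro f ⟨hf1, hf2⟩
    exact main_span t Finset.univ f
      (fun S hS => ⟨Finset.subset_univ S, hf1 S hS⟩) (LinearMap.mem_ker.mp hf2)
  · rw [Submodule.span_le]
    rintro g ⟨l, hlen, hg, hVl, rfl⟩
    refine ⟨fun S hS => ?_, LinearMap.mem_ker.mpr (DV_dProd Finset.univ l hg hVl)⟩
    rw [(dProd_support l S hS).2, hlen]

lemma image_Gset (t : ℕ) :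
    Phi (n := n) '' (Gset t Finset.univ)
      = {p | ∃ a b : Fin t → Fin n, Function.Injective a ∧ Function.Injective b ∧
          (∀ i j, a i ≠ b j) ∧ p = ∏ i : Fin t, (X (a i) - X (b i))} := by
  ext p
  constructor
  · rintro ⟨g, ⟨l, hlen, hg, -, rfl⟩, rfl⟩
    set a : Fin t → Fin n := fun i => (l.get ((finCongr hlen).symm i)).1 with ha_def
    set b : Fin t → Fin n := fun i => (l.get ((finCongr hlen).symm i)).2 with hb_def
    have pw := List.pairwise_iff_get.mp hg.1
    have key : ∀ (i j : Fin l.length), i ≠ j →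
        (l.get i).1 ≠ (l.get j).1 ∧ (l.get i).2 ≠ (l.get j).2 ∧ (l.get i).1 ≠ (l.get j).2 := by
      intro i j hij
      rcases lt_or_gt_of_ne hij with h | h
      · have hpw := pw i j h
        exact ⟨hpw.1, hpw.2.2.2, hpw.2.1⟩
      · have hpw := pw j i h
        exact ⟨hpw.1.symm, hpw.2.2.2.symm, hpw.2.2.1.symm⟩
    refine ⟨a, b, ?_, ?_, ?_, ?_⟩
    · intro i j hij
      by_contra hne
      exact (key _ _ (fun hc => hne (by
        have := congrArg (finCongr hlen) hc
        simpa using this))).1 hij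
    · intro i j hij
      by_contra hne
      exact (key _ _ (fun hc => hne (by
        have := congrArg (finCongr hlen) hc
        simpa using this))).2.1 hij
    · intro i j
      by_cases hij : i = j
      · subst hij
        exact hg.2 _ (l.get_mem _)
      · exact (key _ _ (fun hc => hij (by
          have := congrArg (finCongr hlen) hc
          simpa using this))).2.2
    · rw [Phi_dProd l hg]
      conv_lhs => rw [← List.ofFn_get l, List.map_ofFn, List.prod_ofFn]
      refine Fintype.prod_equiv (finCongr hlen) _ _ fun i => ?_
      simp only [Function.comp_apply, ha_def, hb_def, Equiv.symm_apply_apply]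
  · rintro ⟨a, b, ha, hb, hab, rfl⟩
    set l : List (Fin n × Fin n) := List.ofFn (fun i => (a i, b i)) with hl_def
    have hgood : goodList l := by
      constructor
      · rw [hl_def, List.pairwise_ofFn]
        intro i j hij
        exact ⟨fun hc => (ne_of_lt hij) (ha hc), hab i j,
          fun hc => (hab j i) hc.symm, fun hc => (ne_of_lt hij) (hb hc)⟩
      · intro q hq
        rw [hl_def, List.mem_ofFn] at hq
        obtain ⟨i, rfl⟩ := hq
        exact hab i i
    refine ⟨dProd l, ⟨l, by rw [hl_def, List.length_ofFn], hgood,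
      fun q _ => ⟨Finset.mem_univ _, Finset.mem_univ _⟩, rfl⟩, ?_⟩
    rw [Phi_dProd l hgood, hl_def, List.map_ofFn, List.prod_ofFn]
    rfl

end KerW

/-- For `1 ≤ t ≤ n/2`, the kernel of `W_t : L_t → L_{t-1}` is the span of the
products of differences `Π_{i=1}^{t} (x_{a(2i-1)} - x_{a(2i)})` over all choices
of `2t` pairwise distinct indices. -/
theorem ker_Wt_span (n t : ℕ) (ht1 : 1 ≤ t) (ht2 : 2 * t ≤ n) :
    homogML n t ⊓ LinearMap.ker (Wop n)
      = Submodule.span ℝ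
          {p | ∃ a b : Fin t → Fin n,
            Function.Injective a ∧ Function.Injective b ∧
            (∀ i j, a i ≠ b j) ∧
            p = ∏ i : Fin t, (X (a i) - X (b i))} := by
  rw [inter_eq, abstract_ker_eq, ← Submodule.span_image, image_Gset]
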